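/- Two-point hypercontractivity: for 1 ≤ p ≤ q ≤ ∞, 0 ≤ ρ ≤ √((p-1)/(q-1)), and any δ ∈ [0,1]: ((1/2)(1+ρδ)^q + (1/2)(1-ρδ)^q)^{1/q} ≤ ((1/2)(1+δ)^p + (1/2)(1-δ)^p)^{1/p}. -/

import Mathlib

open Finset Real Set Filter Topology

namespace TPHC

noncomputable def c (a : ℝ) (k : ℕ) : ℝ := (∏ i ∈ Finset.range k, (a - i)) / (k.factorial : ℝ)

lemma c_zero (a : ℝ) : c a 0 = 1 := by simp [c]

lemma c_succ (a : ℝ) (k : ℕ) : c a (k + 1) = c a k * (a - k) / (k + 1) := by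
  rw [c, c, Finset.prod_range_succ, Nat.factorial_succ, div_mul_eq_mul_div, div_div]
  push_cast
  rw [mul_comm ((k:ℝ)+1)]

lemma c_abs_le (a : ℝ) (ha1 : 1 ≤ a) (ha2 : a ≤ 2) (k : ℕ) : |c a k| ≤ 2 := by
  induction k with
  | zero => rw [c_zero]; norm_num
  | succ n ih =>
    rcases Nat.eq_zero_or_pos n with rfl | hn
    · have : c a 1 = a := by rw [c_succ]; simp [c_zero]
      rw [this, abs_of_nonneg (by linarith)]; exact ha2
    · rw [c_succ, abs_div, abs_mul]
      have h1 : |a - n| ≤ (n : ℝ) + 1 := by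
        rw [abs_le]
        have : (1:ℝ) ≤ (n:ℝ) := by exact_mod_cast hn
        constructor <;> nlinarith
      have h2 : |((n:ℝ) + 1)| = (n:ℝ) + 1 := abs_of_pos (by positivity)
      calc |c a n| * |a - n| / |((n:ℝ) + 1)| ≤ 2 * ((n:ℝ)+1) / ((n:ℝ)+1) := by
            rw [h2]
            gcongr
          _ = 2 := by field_simp

lemma summable_c_mul_pow (a : ℝ) (ha1 : 1 ≤ a) (ha2 : a ≤ 2) {x : ℝ} (hx : |x| < 1) :
    Summable (fun k => c a k * x ^ k) := by
  apply Summable.of_norm_bounded (g := fun k => 2 * |x| ^ k)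
    (by simpa using (summable_geometric_of_lt_one (abs_nonneg x) hx).mul_left 2)
  intro k
  rw [norm_mul, Real.norm_eq_abs, Real.norm_eq_abs, abs_pow]
  exact mul_le_mul_of_nonneg_right (c_abs_le a ha1 ha2 k) (by positivity)

end TPHC

namespace TPHC2
open TPHC

noncomputable def F (a x : ℝ) : ℝ := ∑' k, c a k * x ^ k

lemma summable_u {r : ℝ} (hr0 : 0 ≤ r) (hr : r < 1) :
    Summable (fun k : ℕ => 2 * (k : ℝ) * r ^ (k - 1)) := by
  rw [← summable_nat_add_iff 1]
  have hs1 : Summable (fun n : ℕ => (n : ℝ) ^ 1 * r ^ n) :=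
    summable_pow_mul_geometric_of_norm_lt_one 1 (by rwa [Real.norm_eq_abs, abs_of_nonneg hr0])
  have hs2 : Summable (fun n : ℕ => r ^ n) := summable_geometric_of_lt_one hr0 hr
  apply ((hs1.add hs2).mul_left 2).congr
  intro n
  simp only [Nat.add_sub_cancel]
  push_cast
  ring

lemma norm_deriv_term_le (a : ℝ) (ha1 : 1 ≤ a) (ha2 : a ≤ 2) {r y : ℝ} (hy : |y| ≤ r) (k : ℕ) :
    ‖c a k * ((k : ℝ) * y ^ (k - 1))‖ ≤ 2 * (k : ℝ) * r ^ (k - 1) := by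
  have hy0 : (0:ℝ) ≤ r := le_trans (abs_nonneg y) hy
  rw [norm_mul, norm_mul, Real.norm_eq_abs, Real.norm_eq_abs, Real.norm_eq_abs, abs_pow]
  calc |c a k| * (|(k:ℝ)| * |y| ^ (k-1)) ≤ 2 * ((k:ℝ) * r ^ (k-1)) := by
        have : |(k:ℝ)| = (k:ℝ) := abs_of_nonneg (Nat.cast_nonneg k)
        rw [this]
        apply mul_le_mul (c_abs_le a ha1 ha2 k) _ (by positivity) (by norm_num)
        exact mul_le_mul_of_nonneg_left (pow_le_pow_left₀ (abs_nonneg y) hy _) (Nat.cast_nonneg k)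
      _ = 2 * (k:ℝ) * r ^ (k-1) := by ring

lemma summable_F (a : ℝ) (ha1 : 1 ≤ a) (ha2 : a ≤ 2) {x : ℝ} (hx : |x| < 1) :
    Summable (fun k => c a k * x ^ k) := summable_c_mul_pow a ha1 ha2 hx

lemma summable_D (a : ℝ) (ha1 : 1 ≤ a) (ha2 : a ≤ 2) {y : ℝ} (hy : |y| < 1) :
    Summable (fun k : ℕ => c a k * ((k : ℝ) * y ^ (k - 1))) :=
  Summable.of_norm_bounded (summable_u (abs_nonneg y) hy)
    (fun k => norm_deriv_term_le a ha1 ha2 (le_refl _) k)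

lemma hasDerivAt_F (a : ℝ) (ha1 : 1 ≤ a) (ha2 : a ≤ 2) {R : ℝ} (hR : R < 1)
    {y : ℝ} (hy : y ∈ Set.Ioo (-R) R) :
    HasDerivAt (F a) (∑' k, c a k * ((k : ℝ) * y ^ (k - 1))) y := by
  have hR0 : 0 < R := by
    rcases hy with ⟨h1, h2⟩; linarith
  have hy' : |y| < R := abs_lt.2 hy
  apply hasDerivAt_tsum_of_isPreconnected (summable_u hR0.le hR) isOpen_Ioo
    (isPreconnected_Ioo) (fun k z _ => (hasDerivAt_pow k z).const_mul (c a k))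
    (fun k z hz => norm_deriv_term_le a ha1 ha2 (abs_lt.2 hz).le k)
    (Set.mem_Ioo.2 ⟨by linarith, hR0⟩)
    (summable_F a ha1 ha2 (by norm_num))
    hy


lemma term_shift (a y : ℝ) (k : ℕ) :
    (c a k * ((k:ℝ) * y ^ (k-1))) * y = c a k * ((k:ℝ) * y ^ k) := by
  cases k with
  | zero => simp
  | succ n => simp only [Nat.add_sub_cancel]; rw [pow_succ]; ring

lemma key_identity (a : ℝ) (ha1 : 1 ≤ a) (ha2 : a ≤ 2) {y : ℝ} (hy : |y| < 1) :
    (1 + y) * (∑' k, c a k * ((k:ℝ) * y ^ (k-1))) = a * F a y := by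
  have hD := summable_D a ha1 ha2 hy
  have hshift : Summable (fun k : ℕ => c a (k+1) * (((k:ℝ)+1) * y ^ k)) := by
    apply ((summable_nat_add_iff 1).2 hD).congr
    intro n; simp only [Nat.add_sub_cancel]; push_cast; ring
  have hyD : Summable (fun k : ℕ => c a k * ((k:ℝ) * y ^ k)) := by
    apply (hD.mul_right y).congr
    intro n; exact term_shift a y n
  have h1 : (∑' k, c a k * ((k:ℝ) * y ^ (k-1)))
      = ∑' k, c a (k+1) * (((k:ℝ)+1) * y ^ k) := by
    rw [hD.tsum_eq_zero_add]
    simp only [Nat.cast_zero, zero_mul, mul_zero, zero_add, Nat.add_sub_cancel]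
    push_cast
    rfl
  have h2 : y * (∑' k, c a k * ((k:ℝ) * y ^ (k-1)))
      = ∑' k, c a k * ((k:ℝ) * y ^ k) := by
    rw [mul_comm, ← tsum_mul_right]
    exact tsum_congr (fun k => term_shift a y k)
  rw [add_mul, one_mul, h2, h1, ← Summable.tsum_add hshift hyD]
  unfold F
  rw [← tsum_mul_left]
  apply tsum_congr
  intro k
  have hrec : c a (k+1) * ((k:ℝ)+1) = c a k * (a - k) := by
    rw [c_succ]
    have : ((k:ℝ)+1) ≠ 0 := by positivity
    field_simp
  calc c a (k+1) * (((k:ℝ)+1) * y ^ k) + c a k * ((k:ℝ) * y ^ k)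
      = (c a (k+1) * ((k:ℝ)+1)) * y ^ k + c a k * ((k:ℝ) * y ^ k) := by ring
    _ = (c a k * (a - k)) * y ^ k + c a k * ((k:ℝ) * y ^ k) := by rw [hrec]
    _ = a * (c a k * y ^ k) := by ring

lemma F_zero (a : ℝ) : F a 0 = 1 := by
  unfold F
  rw [tsum_eq_single 0]
  · simp [c_zero]
  · intro k hk
    cases k with
    | zero => exact absurd rfl hk
    | succ n => simp

lemma F_eq (a : ℝ) (ha1 : 1 ≤ a) (ha2 : a ≤ 2) {x : ℝ} (hx : |x| < 1) :
    F a x = (1 + x) ^ a := by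
  set R := (1 + |x|) / 2 with hRdef
  have hxR : |x| < R := by rw [hRdef]; linarith
  have hR : R < 1 := by rw [hRdef]; linarith
  have hR0 : 0 < R := lt_of_le_of_lt (abs_nonneg x) hxR
  have hH : ∀ z ∈ Set.Ioo (-R) R,
      HasDerivAt (fun w => F a w * (1 + w) ^ (-a)) 0 z := by
    intro z hz
    have hz1 : 0 < 1 + z := by rcases hz with ⟨h1, h2⟩; linarith
    have hF := hasDerivAt_F a ha1 ha2 hR hz
    have hlin : HasDerivAt (fun w : ℝ => 1 + w) 1 z := (hasDerivAt_id z).const_add 1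
    have hpow : HasDerivAt (fun w : ℝ => (1 + w) ^ (-a))
        (1 * (-a) * (1 + z) ^ (-a - 1)) z :=
      hlin.rpow_const (Or.inl (ne_of_gt hz1))
    have := hF.fun_mul hpow
    refine this.congr_deriv (Eq.symm ?_)
    have hkey := key_identity a ha1 ha2 ((abs_lt.2 ⟨hz.1, hz.2⟩).trans hR)
    have hsplit : (1 + z) ^ (-a) = (1 + z) * (1 + z) ^ (-a - 1) := by
      have h := Real.rpow_add hz1 1 (-a - 1)
      have h2 : (1:ℝ) + (-a - 1) = -a := by ring
      rw [h2, Real.rpow_one] at h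
      exact h
    rw [hsplit]
    linear_combination (-((1 + z) ^ (-a - 1))) * hkey
  have hmem : ∀ z ∈ Set.Icc (-|x|) |x|, z ∈ Set.Ioo (-R) R := by
    intro z hz
    exact ⟨by rcases hz with ⟨h1, h2⟩; linarith, by rcases hz with ⟨h1, h2⟩; linarith⟩
  have h1x : 0 < 1 + x := by
    rcases abs_lt.1 hx with ⟨h1, h2⟩; linarith
  have hHx : F a x * (1 + x) ^ (-a) = 1 := by
    rcases le_or_gt 0 x with hx0 | hx0
    · have habs : |x| = x := abs_of_nonneg hx0
      have key := constant_of_has_deriv_right_zero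
        (f := fun w => F a w * (1 + w) ^ (-a)) (a := 0) (b := x)
        (fun z hz => ((hH z (hmem z ⟨by rcases hz with ⟨h1,h2⟩; linarith [abs_nonneg x], by rcases hz with ⟨h1,h2⟩; rw [habs]; linarith⟩)).differentiableAt.continuousAt).continuousWithinAt)
        (fun z hz => ((hH z (hmem z ⟨by rcases hz with ⟨h1,h2⟩; linarith [abs_nonneg x], by rcases hz with ⟨h1,h2⟩; rw [habs]; linarith⟩))).hasDerivWithinAt)
        x (Set.right_mem_Icc.2 hx0)
      simpa [F_zero, Real.one_rpow] using key
    · have habs : |x| = -x := abs_of_neg hx0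
      have key := constant_of_has_deriv_right_zero
        (f := fun w => F a w * (1 + w) ^ (-a)) (a := x) (b := 0)
        (fun z hz => ((hH z (hmem z ⟨by rcases hz with ⟨h1,h2⟩; rw [habs]; linarith, by rcases hz with ⟨h1,h2⟩; rw [habs]; linarith⟩)).differentiableAt.continuousAt).continuousWithinAt)
        (fun z hz => ((hH z (hmem z ⟨by rcases hz with ⟨h1,h2⟩; rw [habs]; linarith, by rcases hz with ⟨h1,h2⟩; rw [habs]; linarith⟩))).hasDerivWithinAt)
        0 (Set.right_mem_Icc.2 hx0.le)
      simpa [F_zero, Real.one_rpow] using key.symm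
  have hne : (1 + x) ^ a ≠ 0 := (Real.rpow_pos_of_pos h1x a).ne'
  rw [Real.rpow_neg h1x.le] at hHx
  field_simp at hHx
  exact hHx


lemma coeff_ineq (p q : ℝ) (hp : 1 < p) (hpq : p ≤ q) (hq2 : q ≤ 2) :
    ∀ j : ℕ, 1 ≤ j →
      0 ≤ (p/q) * ((∏ i ∈ Finset.range (2*j), (q - i)) * ((p-1)/(q-1))^j) ∧
      (p/q) * ((∏ i ∈ Finset.range (2*j), (q - i)) * ((p-1)/(q-1))^j)
        ≤ ∏ i ∈ Finset.range (2*j), (p - i) := by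
  have hq1 : 1 < q := lt_of_lt_of_le hp hpq
  have hq0 : (0:ℝ) < q := by linarith
  have hq1' : (0:ℝ) < q - 1 := by linarith
  intro j hj
  induction j with
  | zero => omega
  | succ n ih =>
    rcases Nat.eq_zero_or_pos n with rfl | hn
    · have hLHS : (p/q) * ((∏ i ∈ Finset.range (2*1), (q - (i:ℝ))) * ((p-1)/(q-1))^1)
          = p * (p-1) := by
        rw [show (2*1 : ℕ) = 2 by norm_num]
        rw [Finset.prod_range_succ, Finset.prod_range_succ, Finset.prod_range_zero]
        push_cast
        field_simp
        ring
      have hRHS : (∏ i ∈ Finset.range (2*1), (p - (i:ℝ))) = p * (p-1) := by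
        rw [show (2*1:ℕ) = 2 by norm_num, Finset.prod_range_succ, Finset.prod_range_succ,
          Finset.prod_range_zero]
        push_cast; ring
      rw [hLHS, hRHS]
      exact ⟨by nlinarith, le_refl _⟩
    · obtain ⟨ih0, ih1⟩ := ih hn
      have h2n : (2:ℝ) ≤ 2*n := by
        have : (1:ℝ) ≤ (n:ℝ) := by exact_mod_cast hn
        linarith
      -- new factors
      have e1 : (2 : ℕ) * (n+1) = 2*n + 1 + 1 := by ring
      have efac : ∀ a : ℝ, ∏ i ∈ Finset.range (2*(n+1)), (a - i)
          = (∏ i ∈ Finset.range (2*n), (a - i)) * ((a - 2*n) * (a - (2*n+1))) := by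
        intro a
        rw [e1, Finset.prod_range_succ, Finset.prod_range_succ]
        push_cast
        ring
      have hr0 : (0:ℝ) ≤ (p-1)/(q-1) := div_nonneg (by linarith) (by linarith)
      have hr1 : (p-1)/(q-1) ≤ 1 := by
        rw [div_le_one hq1']; linarith
      have hfq0 : (0:ℝ) ≤ (q - 2*n) * (q - (2*n+1)) := by nlinarith
      have hfact : ((p-1)/(q-1)) * ((q - 2*n) * (q - (2*n+1))) ≤ (p - 2*n) * (p - (2*n+1)) := by
        have h1 : (q - 2*n) * (q - (2*n+1)) = (2*n - q) * (2*n + 1 - q) := by ring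
        have h2 : (p - 2*n) * (p - (2*n+1)) = (2*n - p) * (2*n + 1 - p) := by ring
        rw [h1, h2]
        have b1 : (0:ℝ) ≤ 2*n - q := by linarith
        have b2 : (0:ℝ) ≤ 2*n + 1 - q := by linarith
        calc ((p-1)/(q-1)) * ((2*n - q) * (2*n + 1 - q))
            ≤ 1 * ((2*n - p) * (2*n + 1 - p)) := by
              apply mul_le_mul hr1
              · apply mul_le_mul (by linarith) (by linarith) b2 (by linarith)
              · exact mul_nonneg b1 b2
              · norm_num
          _ = (2*n - p) * (2*n + 1 - p) := one_mul _
      constructor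
      · rw [efac]
        have : ((p-1)/(q-1))^(n+1) = ((p-1)/(q-1))^n * ((p-1)/(q-1)) := pow_succ _ _
        rw [this]
        calc (0:ℝ) ≤ ((p/q) * ((∏ i ∈ Finset.range (2*n), (q - i)) * ((p-1)/(q-1))^n))
              * (((q - 2*n) * (q - (2*n+1))) * ((p-1)/(q-1))) :=
                mul_nonneg ih0 (mul_nonneg hfq0 hr0)
          _ = _ := by ring
      · rw [efac, efac, pow_succ]
        calc (p/q) * ((∏ i ∈ Finset.range (2*n), (q - i)) * ((q - 2*n) * (q - (2*n+1)))
              * (((p-1)/(q-1))^n * ((p-1)/(q-1))))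
            = ((p/q) * ((∏ i ∈ Finset.range (2*n), (q - i)) * ((p-1)/(q-1))^n))
              * (((p-1)/(q-1)) * ((q - 2*n) * (q - (2*n+1)))) := by ring
          _ ≤ (∏ i ∈ Finset.range (2*n), (p - i)) * ((p - 2*n) * (p - (2*n+1))) := by
              exact mul_le_mul ih1 hfact (mul_nonneg hr0 hfq0) (ih0.trans ih1)
          _ = _ := by ring


lemma base_lt (p q δ : ℝ) (hp : 1 < p) (hpq : p ≤ q) (hq2 : q ≤ 2)
    (hδ0 : 0 ≤ δ) (hδ1 : δ < 1) :
    ((1 + Real.sqrt ((p-1)/(q-1)) * δ) ^ q + (1 - Real.sqrt ((p-1)/(q-1)) * δ) ^ q) / 2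
      ≤ (((1 + δ) ^ p + (1 - δ) ^ p) / 2) ^ (q / p) := by
  have hq1 : 1 < q := lt_of_lt_of_le hp hpq
  have hp0 : (0:ℝ) < p := by linarith
  have hq0 : (0:ℝ) < q := by linarith
  set r : ℝ := (p-1)/(q-1) with hrdef
  have hr0 : 0 ≤ r := div_nonneg (by linarith) (by linarith)
  have hr1 : r ≤ 1 := by rw [hrdef, div_le_one (by linarith)]; linarith
  set ρ : ℝ := Real.sqrt r with hρdef
  have hρ0 : 0 ≤ ρ := Real.sqrt_nonneg r
  have hρ1 : ρ ≤ 1 := by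
    rw [hρdef]
    nlinarith [Real.sq_sqrt hr0, Real.sqrt_nonneg r]
  set x : ℝ := ρ * δ with hxdef
  have hx0 : 0 ≤ x := mul_nonneg hρ0 hδ0
  have hxδ : x ≤ δ := by
    calc x = ρ * δ := rfl
      _ ≤ 1 * δ := mul_le_mul_of_nonneg_right hρ1 hδ0
      _ = δ := one_mul δ
  have hx1 : x < 1 := lt_of_le_of_lt hxδ hδ1
  have hxabs : |x| < 1 := by rw [abs_of_nonneg hx0]; exact hx1
  have hδabs : |δ| < 1 := by rw [abs_of_nonneg hδ0]; exact hδ1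
  have hmxabs : |(-x)| < 1 := by rwa [abs_neg]
  have hmδabs : |(-δ)| < 1 := by rwa [abs_neg]
  -- HasSum facts
  have hqp : HasSum (fun k => c q k * x ^ k) ((1 + x) ^ q) := by
    have h := (summable_F q hq1.le hq2 hxabs).hasSum
    rwa [show (∑' k, c q k * x ^ k) = F q x from rfl, F_eq q hq1.le hq2 hxabs] at h
  have hqm : HasSum (fun k => c q k * (-x) ^ k) ((1 - x) ^ q) := by
    have h := (summable_F q hq1.le hq2 hmxabs).hasSum
    rwa [show (∑' k, c q k * (-x) ^ k) = F q (-x) from rfl, F_eq q hq1.le hq2 hmxabs,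
      show (1 + -x) = 1 - x from by ring] at h
  have hpp : HasSum (fun k => c p k * δ ^ k) ((1 + δ) ^ p) := by
    have h := (summable_F p hp.le (by linarith) hδabs).hasSum
    rwa [show (∑' k, c p k * δ ^ k) = F p δ from rfl, F_eq p hp.le (by linarith) hδabs] at h
  have hpm : HasSum (fun k => c p k * (-δ) ^ k) ((1 - δ) ^ p) := by
    have h := (summable_F p hp.le (by linarith) hmδabs).hasSum
    rwa [show (∑' k, c p k * (-δ) ^ k) = F p (-δ) from rfl, F_eq p hp.le (by linarith) hmδabs,
      show (1 + -δ) = 1 - δ from by ring] at h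
  set Sq : ℝ := ((1 + x) ^ q + (1 - x) ^ q) / 2 with hSqdef
  set Sp : ℝ := ((1 + δ) ^ p + (1 - δ) ^ p) / 2 with hSpdef
  have hφq : HasSum (fun k => c q k * ((x ^ k + (-x) ^ k) / 2)) Sq := by
    have hfun : (fun k => c q k * ((x ^ k + (-x) ^ k) / 2))
        = (fun k : ℕ => (c q k * x ^ k + c q k * (-x) ^ k) / 2) := by funext k; ring
    rw [hfun]
    exact (hqp.add hqm).div_const 2
  have hφp : HasSum (fun k => c p k * ((δ ^ k + (-δ) ^ k) / 2)) Sp := by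
    have hfun : (fun k => c p k * ((δ ^ k + (-δ) ^ k) / 2))
        = (fun k : ℕ => (c p k * δ ^ k + c p k * (-δ) ^ k) / 2) := by funext k; ring
    rw [hfun]
    exact (hpp.add hpm).div_const 2
  have hφq' : HasSum (fun k => c q (k+1) * ((x ^ (k+1) + (-x) ^ (k+1)) / 2)) (Sq - 1) := by
    have h := (hasSum_nat_add_iff' 1).2 hφq
    simpa [c_zero] using h
  have hφp' : HasSum (fun k => c p (k+1) * ((δ ^ (k+1) + (-δ) ^ (k+1)) / 2)) (Sp - 1) := by
    have h := (hasSum_nat_add_iff' 1).2 hφp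
    simpa [c_zero] using h
  -- termwise comparison
  have termwise : ∀ k : ℕ, (p/q) * (c q (k+1) * ((x ^ (k+1) + (-x) ^ (k+1)) / 2))
      ≤ c p (k+1) * ((δ ^ (k+1) + (-δ) ^ (k+1)) / 2) := by
    intro k
    rcases Nat.even_or_odd (k+1) with he | ho
    · -- even case
      obtain ⟨j, hj⟩ := he
      have hj1 : 1 ≤ j := by omega
      have hn2 : k + 1 = 2 * j := by omega
      have hneg : ∀ y : ℝ, (-y) ^ (k+1) = y ^ (k+1) := fun y => (by rw [hn2]; exact (Even.neg_pow (by exact ⟨j, by ring⟩) y))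
      rw [hneg, hneg]
      have hsimp : ∀ y : ℝ, (y ^ (k+1) + y ^ (k+1)) / 2 = y ^ (k+1) := fun y => by ring
      rw [hsimp, hsimp]
      have hxn : x ^ (k+1) = r ^ j * δ ^ (k+1) := by
        have hx2 : x ^ 2 = r * δ ^ 2 := by
          rw [hxdef, mul_pow, hρdef, Real.sq_sqrt hr0]
        rw [hn2, pow_mul, pow_mul, hx2, mul_pow]
      have hco := coeff_ineq p q hp hpq hq2 j hj1
      have hfac : (0:ℝ) < ((k+1).factorial : ℝ) := by positivity
      have hδn : (0:ℝ) ≤ δ ^ (k+1) := pow_nonneg hδ0 _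
      calc (p/q) * (c q (k+1) * x ^ (k+1))
          = ((p/q) * ((∏ i ∈ Finset.range (2*j), (q - i)) * r ^ j)) * δ ^ (k+1)
            / ((k+1).factorial : ℝ) := by
            rw [c, hxn, hn2]; ring
        _ ≤ (∏ i ∈ Finset.range (2*j), (p - i)) * δ ^ (k+1) / ((k+1).factorial : ℝ) := by
            gcongr
            exact hco.2
        _ = c p (k+1) * δ ^ (k+1) := by rw [c, hn2]; ring
    · -- odd case
      have hneg : ∀ y : ℝ, (-y) ^ (k+1) = -(y ^ (k+1)) := fun y => ho.neg_pow y
      rw [hneg, hneg]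
      simp
  have hsum : (p/q) * (Sq - 1) ≤ Sp - 1 :=
    hasSum_le termwise (hφq'.mul_left (p/q)) hφp'
  -- Sq ≥ 1 via Bernoulli
  have hSq1 : 1 ≤ Sq := by
    have h1 : 1 + q * x ≤ (1 + x) ^ q := one_add_mul_self_le_rpow_one_add (by linarith) hq1.le
    have h2 : 1 + q * (-x) ≤ (1 + (-x)) ^ q := one_add_mul_self_le_rpow_one_add (by linarith) hq1.le
    rw [show (1 + -x) = 1 - x from by ring] at h2
    rw [hSqdef]; nlinarith
  -- Bernoulli final step
  have hqp1 : 1 ≤ q / p := (one_le_div hp0).2 hpq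
  have hs0 : 0 ≤ (p/q) * (Sq - 1) := mul_nonneg (by positivity) (by linarith)
  have hb : 1 + (q/p) * ((p/q) * (Sq - 1)) ≤ (1 + (p/q) * (Sq - 1)) ^ (q/p) :=
    one_add_mul_self_le_rpow_one_add (by linarith) hqp1
  have hcalc : (q/p) * ((p/q) * (Sq - 1)) = Sq - 1 := by
    field_simp
  rw [hcalc] at hb
  have hfinal : Sq ≤ Sp ^ (q/p) := by
    calc Sq = 1 + (Sq - 1) := by ring
      _ ≤ (1 + (p/q) * (Sq - 1)) ^ (q/p) := hb
      _ ≤ Sp ^ (q/p) := Real.rpow_le_rpow (by linarith) (by linarith) (by positivity)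
  exact hfinal


noncomputable def G (r d : ℝ) : ℝ := ((1 + d) ^ r + (1 - d) ^ r) / 2

lemma G_hasDerivAt (r : ℝ) (hr : 1 ≤ r) (d : ℝ) :
    HasDerivAt (fun d => (1 + d) ^ r + (1 - d) ^ r)
      (1 * r * (1 + d) ^ (r - 1) + (-1) * r * (1 - d) ^ (r - 1)) d := by
  have h1 : HasDerivAt (fun d : ℝ => 1 + d) 1 d := (hasDerivAt_id d).const_add 1
  have h2 : HasDerivAt (fun d : ℝ => 1 - d) (-1) d := by
    have h := ((hasDerivAt_id d).const_mul (-1)).const_add 1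
    simpa [sub_eq_add_neg, neg_one_mul] using h
  exact (h1.rpow_const (Or.inr hr)).add (h2.rpow_const (Or.inr hr))

lemma G_mono (r : ℝ) (hr : 1 ≤ r) : MonotoneOn (fun d => (1 + d) ^ r + (1 - d) ^ r)
    (Set.Icc (0:ℝ) 1) := by
  apply monotoneOn_of_deriv_nonneg (convex_Icc 0 1)
  · exact fun d _ => ((G_hasDerivAt r hr d).continuousAt).continuousWithinAt
  · intro d _
    exact ((G_hasDerivAt r hr d).differentiableAt).differentiableWithinAt
  · intro d hd
    rw [interior_Icc] at hd
    rw [(G_hasDerivAt r hr d).deriv]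
    have hle : (1 - d) ^ (r - 1) ≤ (1 + d) ^ (r - 1) := by
      apply Real.rpow_le_rpow (by rcases hd with ⟨h1, h2⟩; linarith)
        (by rcases hd with ⟨h1, h2⟩; linarith) (by linarith)
    have hr0 : (0:ℝ) ≤ r := by linarith
    nlinarith

lemma G_pos (r d : ℝ) (hr : 1 ≤ r) (hd0 : 0 ≤ d) (hd1 : d ≤ 1) : 1 ≤ G r d := by
  have h1 : 1 + r * d ≤ (1 + d) ^ r := one_add_mul_self_le_rpow_one_add (by linarith) hr
  have h2 : 1 + r * (-d) ≤ (1 + (-d)) ^ r := one_add_mul_self_le_rpow_one_add (by linarith) hr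
  rw [show (1 + -d) = 1 - d from by ring] at h2
  unfold G
  nlinarith

lemma base_norm (p q δ : ℝ) (hp : 1 < p) (hpq : p ≤ q) (hq2 : q ≤ 2)
    (hδ0 : 0 ≤ δ) (hδ1 : δ ≤ 1) :
    (G q (Real.sqrt ((p-1)/(q-1)) * δ)) ^ (1/q) ≤ (G p δ) ^ (1/p) := by
  have hq1 : 1 < q := lt_of_lt_of_le hp hpq
  have hp0 : (0:ℝ) < p := by linarith
  have hq0 : (0:ℝ) < q := by linarith
  -- the case δ < 1 directly, δ = 1 by continuity
  have main : ∀ d : ℝ, 0 ≤ d → d < 1 →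
      (G q (Real.sqrt ((p-1)/(q-1)) * d)) ^ (1/q) ≤ (G p d) ^ (1/p) := by
    intro d hd0 hd1
    have h := base_lt p q d hp hpq hq2 hd0 hd1
    have hG : G q (Real.sqrt ((p-1)/(q-1)) * d) ≤ (G p d) ^ (q/p) := h
    have hρ1 : Real.sqrt ((p-1)/(q-1)) ≤ 1 := by
      have hr0 : 0 ≤ (p-1)/(q-1) := div_nonneg (by linarith) (by linarith)
      have hr1 : (p-1)/(q-1) ≤ 1 := by rw [div_le_one (by linarith)]; linarith
      nlinarith [Real.sq_sqrt hr0, Real.sqrt_nonneg ((p-1)/(q-1))]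
    have hbd : Real.sqrt ((p-1)/(q-1)) * d ≤ 1 := by
      calc Real.sqrt ((p-1)/(q-1)) * d ≤ 1 * 1 :=
            mul_le_mul hρ1 hd1.le hd0 (by norm_num)
        _ = 1 := one_mul 1
    have hGnn : 0 ≤ G q (Real.sqrt ((p-1)/(q-1)) * d) := by
      have := G_pos q (Real.sqrt ((p-1)/(q-1)) * d) hq1.le
        (mul_nonneg (Real.sqrt_nonneg _) hd0) hbd
      linarith
    calc (G q (Real.sqrt ((p-1)/(q-1)) * d)) ^ (1/q)
        ≤ ((G p d) ^ (q/p)) ^ (1/q) := Real.rpow_le_rpow hGnn hG (by positivity)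
      _ = (G p d) ^ (1/p) := by
          rw [← Real.rpow_mul (by
            have := G_pos p d hp.le hd0 hd1.le; linarith)]
          congr 1
          field_simp
  rcases lt_or_eq_of_le hδ1 with hlt | heq
  · exact main δ hδ0 hlt
  · -- δ = 1 : continuity
    subst heq
    set ρ : ℝ := Real.sqrt ((p-1)/(q-1)) with hρdef
    have hρ0 : 0 ≤ ρ := Real.sqrt_nonneg _
    have hGcont : ∀ r c : ℝ, 1 ≤ r → 0 ≤ c → ContinuousAt (fun d : ℝ => G r (c * d)) 1 := by
      intro r c hr hc
      have hinner1 : ContinuousAt (fun d : ℝ => 1 + c * d) 1 :=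
        (continuous_const.add (continuous_const.mul continuous_id)).continuousAt
      have hinner2 : ContinuousAt (fun d : ℝ => 1 - c * d) 1 :=
        (continuous_const.sub (continuous_const.mul continuous_id)).continuousAt
      have h1 : ContinuousAt (fun d : ℝ => (1 + c * d) ^ r) 1 :=
        (Real.continuousAt_rpow_const _ r (Or.inr (by linarith))).comp hinner1
      have h2 : ContinuousAt (fun d : ℝ => (1 - c * d) ^ r) 1 :=
        (Real.continuousAt_rpow_const _ r (Or.inr (by linarith))).comp hinner2
      exact (h1.add h2).div_const 2
    have hρ1 : ρ ≤ 1 := by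
      have hr0 : 0 ≤ (p-1)/(q-1) := div_nonneg (by linarith) (by linarith)
      have hr1 : (p-1)/(q-1) ≤ 1 := by rw [div_le_one (by linarith)]; linarith
      nlinarith [Real.sq_sqrt hr0, Real.sqrt_nonneg ((p-1)/(q-1))]
    have hGq1 : 1 ≤ G q (ρ * 1) := G_pos q (ρ * 1) hq1.le (by nlinarith) (by nlinarith)
    have hGp1 : 1 ≤ G p 1 := G_pos p 1 hp.le (by norm_num) (le_refl 1)
    have hLc : ContinuousAt (fun d : ℝ => (G q (ρ * d)) ^ (1/q)) 1 :=
      (Real.continuousAt_rpow_const _ (1/q) (Or.inl (by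
        show G q (ρ * 1) ≠ 0; linarith))).comp (hGcont q ρ hq1.le hρ0)
    have hRc : ContinuousAt (fun d : ℝ => (G p d) ^ (1/p)) 1 := by
      have := (Real.continuousAt_rpow_const (G p 1) (1/p) (Or.inl (by linarith))).comp
        ((hGcont p 1 hp.le (by norm_num)).congr (by
          filter_upwards with d
          simp [one_mul]))
      exact this
    have hLt : Tendsto (fun d : ℝ => (G q (ρ * d)) ^ (1/q)) (nhdsWithin 1 (Set.Iio 1))
        (nhds ((G q (ρ * 1)) ^ (1/q))) := hLc.tendsto.mono_left nhdsWithin_le_nhds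
    have hRt : Tendsto (fun d : ℝ => (G p d) ^ (1/p)) (nhdsWithin 1 (Set.Iio 1))
        (nhds ((G p 1) ^ (1/p))) := hRc.tendsto.mono_left nhdsWithin_le_nhds
    have hev : ∀ᶠ d in nhdsWithin (1:ℝ) (Set.Iio 1),
        (G q (ρ * d)) ^ (1/q) ≤ (G p d) ^ (1/p) := by
      filter_upwards [Ioo_mem_nhdsLT_of_mem (Set.mem_Ioc.2 ⟨zero_lt_one, le_refl (1:ℝ)⟩)]
        with d hd
      exact main d hd.1.le hd.2
    exact le_of_tendsto_of_tendsto hLt hRt hev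


lemma holder2 (P P' : ℝ) (hconj : P.HolderConjugate P') (u1 u2 v1 v2 : ℝ)
    (hu1 : 0 ≤ u1) (hu2 : 0 ≤ u2) (hv1 : 0 ≤ v1) (hv2 : 0 ≤ v2) :
    (u1*v1 + u2*v2)/2 ≤ ((u1^P + u2^P)/2)^(1/P) * ((v1^P' + v2^P')/2)^(1/P') := by
  have hP0 : (0:ℝ) < P := hconj.pos
  have hP'0 : (0:ℝ) < P' := hconj.symm.pos
  set c1 : ℝ := ((1:ℝ)/2)^(1/P) with hc1def
  set c2 : ℝ := ((1:ℝ)/2)^(1/P') with hc2def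
  have hhalf : (0:ℝ) < 1/2 := by norm_num
  have hc1 : 0 ≤ c1 := Real.rpow_nonneg (by norm_num) _
  have hc2 : 0 ≤ c2 := Real.rpow_nonneg (by norm_num) _
  have hcc : c1 * c2 = 1/2 := by
    rw [hc1def, hc2def, ← Real.rpow_add hhalf]
    have : 1/P + 1/P' = 1 := by
      have := hconj.inv_add_inv_eq_one
      rw [one_div, one_div]
      exact this
    rw [this, Real.rpow_one]
  have hc1P : c1 ^ P = 1/2 := by
    rw [hc1def, ← Real.rpow_mul (by norm_num : (0:ℝ) ≤ 1/2)]
    rw [show 1/P * P = 1 from by field_simp, Real.rpow_one]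
  have hc2P : c2 ^ P' = 1/2 := by
    rw [hc2def, ← Real.rpow_mul (by norm_num : (0:ℝ) ≤ 1/2)]
    rw [show 1/P' * P' = 1 from by field_simp, Real.rpow_one]
  have key := Real.inner_le_Lp_mul_Lq_of_nonneg (Finset.univ : Finset (Fin 2))
    (f := ![u1*c1, u2*c1]) (g := ![v1*c2, v2*c2]) hconj
    (by intro i _; fin_cases i <;> simp <;> positivity)
    (by intro i _; fin_cases i <;> simp <;> positivity)
  rw [Fin.sum_univ_two, Fin.sum_univ_two, Fin.sum_univ_two] at key
  simp only [Matrix.cons_val_zero, Matrix.cons_val_one, Matrix.head_cons] at key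
  have e1 : u1*c1*(v1*c2) + u2*c1*(v2*c2) = (u1*v1 + u2*v2)/2 := by
    have : u1*c1*(v1*c2) + u2*c1*(v2*c2) = (u1*v1 + u2*v2)*(c1*c2) := by ring
    rw [this, hcc]; ring
  have e2 : (u1*c1)^P + (u2*c1)^P = (u1^P + u2^P)/2 := by
    rw [Real.mul_rpow hu1 hc1, Real.mul_rpow hu2 hc1, hc1P]; ring
  have e3 : (v1*c2)^P' + (v2*c2)^P' = (v1^P' + v2^P')/2 := by
    rw [Real.mul_rpow hv1 hc2, Real.mul_rpow hv2 hc2, hc2P]; ring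
  rw [e1, e2, e3] at key
  exact key


lemma dual_case (P Q δ : ℝ) (hP2 : 2 ≤ P) (hPQ : P ≤ Q) (hδ0 : 0 ≤ δ) (hδ1 : δ ≤ 1) :
    (G Q (Real.sqrt ((P-1)/(Q-1)) * δ)) ^ (1/Q) ≤ (G P δ) ^ (1/P) := by
  have hP1 : 1 < P := by linarith
  have hQ1 : 1 < Q := by linarith
  have hQ0 : (0:ℝ) < Q := by linarith
  set ρ : ℝ := Real.sqrt ((P-1)/(Q-1)) with hρdef
  have hr0 : 0 ≤ (P-1)/(Q-1) := div_nonneg (by linarith) (by linarith)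
  have hr1 : (P-1)/(Q-1) ≤ 1 := by rw [div_le_one (by linarith)]; linarith
  have hρ0 : 0 ≤ ρ := Real.sqrt_nonneg _
  have hρsq : ρ^2 = (P-1)/(Q-1) := Real.sq_sqrt hr0
  have hρ1 : ρ ≤ 1 := by nlinarith
  set x : ℝ := ρ * δ with hxdef
  have hx0 : 0 ≤ x := mul_nonneg hρ0 hδ0
  have hx1 : x ≤ 1 := by
    calc x = ρ * δ := rfl
      _ ≤ 1 * 1 := mul_le_mul hρ1 hδ1 hδ0 (by norm_num)
      _ = 1 := one_mul 1
  set A : ℝ := 1 + x with hAdef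
  set B : ℝ := 1 - x with hBdef
  have hA0 : (0:ℝ) < A := by rw [hAdef]; linarith
  have hB0 : (0:ℝ) ≤ B := by rw [hBdef]; linarith
  have hAB : B ≤ A := by rw [hAdef, hBdef]; linarith
  set g1 : ℝ := A^(Q-1) with hg1def
  set g2 : ℝ := B^(Q-1) with hg2def
  have hg1pos : 0 < g1 := Real.rpow_pos_of_pos hA0 _
  have hg2nn : 0 ≤ g2 := Real.rpow_nonneg hB0 _
  have hg12 : g2 ≤ g1 := Real.rpow_le_rpow hB0 hAB (by linarith)
  set a : ℝ := (g1+g2)/2 with hadef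
  set b : ℝ := (g1-g2)/2 with hbdef
  have ha0 : 0 < a := by rw [hadef]; linarith
  have hb0 : 0 ≤ b := by rw [hbdef]; linarith
  have hba : b ≤ a := by rw [hadef, hbdef]; linarith
  set W : ℝ := G Q x with hWdef
  have hW1 : 1 ≤ W := G_pos Q x hQ1.le hx0 hx1
  have hW0 : 0 < W := by linarith
  have hAQ : A^Q = A * g1 := by
    have h := Real.rpow_add' hA0.le (show (1:ℝ) + (Q-1) ≠ 0 by
      rw [show (1:ℝ) + (Q-1) = Q from by ring]; linarith)
    rw [show (1:ℝ) + (Q-1) = Q from by ring, Real.rpow_one] at h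
    rw [h, hg1def]
  have hBQ : B^Q = B * g2 := by
    have h := Real.rpow_add' hB0 (show (1:ℝ) + (Q-1) ≠ 0 by
      rw [show (1:ℝ) + (Q-1) = Q from by ring]; linarith)
    rw [show (1:ℝ) + (Q-1) = Q from by ring, Real.rpow_one] at h
    rw [h, hg2def]
  have hWsplit : W = (A*g1 + B*g2)/2 := by
    rw [hWdef]
    unfold G
    rw [← hAdef, ← hBdef, hAQ, hBQ]
  -- conjugate exponents
  set P' : ℝ := P/(P-1) with hP'def
  set Q' : ℝ := Q/(Q-1) with hQ'def
  have hP1' : (0:ℝ) < P - 1 := by linarith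
  have hQ1' : (0:ℝ) < Q - 1 := by linarith
  have hconjP : P.HolderConjugate P' := (Real.holderConjugate_iff_eq_conjExponent hP1).2 hP'def
  have hconjQ : Q.HolderConjugate Q' := (Real.holderConjugate_iff_eq_conjExponent hQ1).2 hQ'def
  have hP'1 : 1 < P' := hconjP.symm.lt
  have hQ'1 : 1 < Q' := hconjQ.symm.lt
  have hP'2 : P' ≤ 2 := by
    rw [hP'def, div_le_iff₀ hP1']; linarith
  have hQ'P' : Q' ≤ P' := by
    rw [hP'def, hQ'def, div_le_div_iff₀ hQ1' hP1']; nlinarith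
  have hρeq : Real.sqrt ((Q'-1)/(P'-1)) = ρ := by
    rw [hρdef]
    congr 1
    rw [hP'def, hQ'def]
    field_simp
    ring
  clear_value ρ x A B g1 g2 a b W P' Q'
  -- Hoelder
  have hρb0 : 0 ≤ ρ * b := mul_nonneg hρ0 hb0
  have hρbb : ρ * b ≤ b := by
    calc ρ * b ≤ 1 * b := mul_le_mul_of_nonneg_right hρ1 hb0
      _ = b := one_mul b
  have hv1 : 0 ≤ a + ρ*b := by linarith
  have hv2 : 0 ≤ a - ρ*b := by linarith
  have hH := holder2 P P' hconjP (1+δ) (1-δ) (a+ρ*b) (a-ρ*b)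
    (by linarith) (by linarith) hv1 hv2
  have hident : (1+δ)*(a+ρ*b) + (1-δ)*(a-ρ*b) = A*g1 + B*g2 := by
    rw [hAdef, hBdef, hadef, hbdef, hxdef]; ring
  -- second factor equals a * (G P' (ρ*(b/a)))^(1/P')
  have hba' : b/a ≤ 1 := (div_le_one ha0).2 hba
  have hba0 : 0 ≤ b/a := div_nonneg hb0 ha0.le
  have ht0 : 0 ≤ ρ*(b/a) := mul_nonneg hρ0 hba0
  have ht1 : ρ*(b/a) ≤ 1 := by
    calc ρ*(b/a) ≤ 1*1 := mul_le_mul hρ1 hba' hba0 (by norm_num)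
      _ = 1 := one_mul 1
  have hab : a * (b/a) = b := by rw [mul_comm, div_mul_cancel₀ _ ha0.ne']
  have hfac2 : (((a+ρ*b)^P' + (a-ρ*b)^P')/2)^(1/P') = a * (G P' (ρ*(b/a)))^(1/P') := by
    have e1 : a + ρ*b = a * (1 + ρ*(b/a)) := by
      rw [mul_add, mul_one, mul_comm ρ (b/a), ← mul_assoc, hab, mul_comm b ρ]
    have e2 : a - ρ*b = a * (1 - ρ*(b/a)) := by
      rw [mul_sub, mul_one, mul_comm ρ (b/a), ← mul_assoc, hab, mul_comm b ρ]
    rw [e1, e2, Real.mul_rpow ha0.le (by linarith), Real.mul_rpow ha0.le (by linarith)]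
    rw [show a^P' * (1 + ρ*(b/a))^P' + a^P' * (1 - ρ*(b/a))^P'
        = a^P' * (((1 + ρ*(b/a))^P' + (1 - ρ*(b/a))^P')) from by ring]
    rw [mul_div_assoc, Real.mul_rpow (Real.rpow_nonneg ha0.le _) (by
      apply div_nonneg _ (by norm_num)
      have h1 : (0:ℝ) ≤ (1 + ρ*(b/a))^P' := Real.rpow_nonneg (by linarith) _
      have h2 : (0:ℝ) ≤ (1 - ρ*(b/a))^P' := Real.rpow_nonneg (by linarith) _
      linarith)]
    rw [← Real.rpow_mul ha0.le, show P' * (1/P') = 1 from by field_simp, Real.rpow_one]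
    rfl
  -- third : a * (G Q' (b/a))^(1/Q') = W^(1/Q')
  have hgsum : a + b = g1 := by rw [hadef, hbdef]; ring
  have hgdiff : a - b = g2 := by rw [hadef, hbdef]; ring
  have hWAB : W = (A^Q + B^Q)/2 := by
    rw [hWdef]; unfold G; rw [← hAdef, ← hBdef]
  have hg1Q' : g1^Q' = A^Q := by
    rw [hg1def, ← Real.rpow_mul hA0.le]
    congr 1
    rw [hQ'def]
    field_simp
  have hg2Q' : g2^Q' = B^Q := by
    rw [hg2def, ← Real.rpow_mul hB0]
    congr 1
    rw [hQ'def]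
    field_simp
  have hthird : a * (G Q' (b/a))^(1/Q') = W^(1/Q') := by
    unfold G
    have e1 : 1 + b/a = g1/a := by rw [← hgsum, add_div, div_self ha0.ne']
    have e2 : 1 - b/a = g2/a := by rw [← hgdiff, sub_div, div_self ha0.ne']
    rw [e1, e2, Real.div_rpow hg1pos.le ha0.le, Real.div_rpow hg2nn ha0.le,
      ← add_div, hg1Q', hg2Q']
    rw [show (A^Q + B^Q)/a^Q'/2 = W / a^Q' from by rw [hWAB]; ring]
    rw [Real.div_rpow hW0.le (Real.rpow_nonneg ha0.le _)]
    rw [← Real.rpow_mul ha0.le, show Q' * (1/Q') = 1 from by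
      rw [hQ'def]; field_simp, Real.rpow_one]
    rw [mul_div_cancel₀ _ ha0.ne']
  -- combine
  have hchain : W ≤ (G P δ)^(1/P) * W^(1/Q') := by
    calc W = ((1+δ)*(a+ρ*b) + (1-δ)*(a-ρ*b))/2 := by rw [hWsplit, hident]
      _ ≤ ((((1+δ)^P + (1-δ)^P)/2)^(1/P)) * ((((a+ρ*b)^P' + (a-ρ*b)^P')/2)^(1/P')) := hH
      _ = (G P δ)^(1/P) * (a * (G P' (ρ*(b/a)))^(1/P')) := by rw [hfac2]; rfl
      _ ≤ (G P δ)^(1/P) * (a * (G Q' (b/a))^(1/Q')) := by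
          have hbase := base_norm Q' P' (b/a) hQ'1 hQ'P' hP'2 hba0 hba'
          rw [hρeq] at hbase
          apply mul_le_mul_of_nonneg_left _ (Real.rpow_nonneg (by
            have := G_pos P δ hP1.le hδ0 hδ1; unfold G at this ⊢; linarith) _)
          exact mul_le_mul_of_nonneg_left hbase ha0.le
      _ = (G P δ)^(1/P) * W^(1/Q') := by rw [hthird]
  have hQQ' : 1/Q + 1/Q' = 1 := by
    have := hconjQ.inv_add_inv_eq_one
    rw [one_div, one_div]
    exact this
  have hWmul : W^(1/Q) * W^(1/Q') = W := by
    rw [← Real.rpow_add hW0, hQQ', Real.rpow_one]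
  have hWQ'pos : 0 < W^(1/Q') := Real.rpow_pos_of_pos hW0 _
  have hfin : W^(1/Q) * W^(1/Q') ≤ (G P δ)^(1/P) * W^(1/Q') := by
    rw [hWmul]; exact hchain
  exact le_of_mul_le_mul_right hfin hWQ'pos


lemma main_norm (p q δ : ℝ) (hp : 1 < p) (hpq : p ≤ q) (hδ0 : 0 ≤ δ) (hδ1 : δ ≤ 1) :
    (G q (Real.sqrt ((p-1)/(q-1)) * δ)) ^ (1/q) ≤ (G p δ) ^ (1/p) := by
  rcases le_or_gt q 2 with hq2 | hq2
  · exact base_norm p q δ hp hpq hq2 hδ0 hδ1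
  · rcases le_or_gt 2 p with hp2 | hp2
    · exact dual_case p q δ hp2 hpq hδ0 hδ1
    · -- composition through 2
      set ρ1 : ℝ := Real.sqrt (p-1) with hρ1def
      have hρ10 : 0 ≤ ρ1 := Real.sqrt_nonneg _
      have hρ1sq : ρ1^2 = p - 1 := Real.sq_sqrt (by linarith)
      have hρ11 : ρ1 ≤ 1 := by nlinarith
      set δ2 : ℝ := ρ1 * δ with hδ2def
      have hδ20 : 0 ≤ δ2 := mul_nonneg hρ10 hδ0
      have hδ21 : δ2 ≤ 1 := by
        calc δ2 = ρ1 * δ := rfl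
          _ ≤ 1 * 1 := mul_le_mul hρ11 hδ1 hδ0 (by norm_num)
          _ = 1 := one_mul 1
      have hA := base_norm p 2 δ hp hp2.le (le_refl 2) hδ0 hδ1
      have hB := dual_case 2 q δ2 (le_refl 2) hq2.le hδ20 hδ21
      have he1 : Real.sqrt ((p-1)/(2-1)) = ρ1 := by
        rw [hρ1def]; norm_num
      have he2 : Real.sqrt (((2:ℝ)-1)/(q-1)) * δ2 = Real.sqrt ((p-1)/(q-1)) * δ := by
        rw [hδ2def, hρ1def, ← mul_assoc, ← Real.sqrt_mul (by
          apply div_nonneg (by norm_num)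
          linarith) (p-1)]
        congr 2
        rw [div_mul_eq_mul_div]
        norm_num
      rw [he1] at hA
      rw [he2] at hB
      exact le_trans hB hA

end TPHC2

/-- Two-point hypercontractivity: for `1 ≤ p ≤ q`, `0 ≤ ρ ≤ √((p-1)/(q-1))`, and `δ ∈ [0,1]`,
`((1/2)(1+ρδ)^q + (1/2)(1-ρδ)^q)^{1/q} ≤ ((1/2)(1+δ)^p + (1/2)(1-δ)^p)^{1/p}`. -/
theorem two_point_hypercontractivity (p q ρ δ : ℝ)
    (hp : 1 ≤ p) (hpq : p ≤ q) (hρ0 : 0 ≤ ρ) (hρ : ρ ≤ Real.sqrt ((p - 1) / (q - 1)))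
    (hδ0 : 0 ≤ δ) (hδ1 : δ ≤ 1) :
    ((1 / 2) * (1 + ρ * δ) ^ q + (1 / 2) * (1 - ρ * δ) ^ q) ^ (1 / q)
      ≤ ((1 / 2) * (1 + δ) ^ p + (1 / 2) * (1 - δ) ^ p) ^ (1 / p) := by
  have hL : (1/2) * (1 + ρ*δ)^q + (1/2) * (1 - ρ*δ)^q = TPHC2.G q (ρ*δ) := by
    unfold TPHC2.G; ring
  have hR : (1/2) * (1 + δ)^p + (1/2) * (1 - δ)^p = TPHC2.G p δ := by
    unfold TPHC2.G; ring
  rw [hL, hR]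
  rcases eq_or_lt_of_le hp with heq | hp1
  · -- p = 1 forces ρ = 0
    subst heq
    have hsq : Real.sqrt (((1:ℝ) - 1)/(q-1)) = 0 := by
      rw [show ((1:ℝ)-1)/(q-1) = 0 from by rw [sub_self, zero_div], Real.sqrt_zero]
    have hρz : ρ = 0 := le_antisymm (hsq ▸ hρ) hρ0
    subst hρz
    rw [zero_mul]
    have hG1 : TPHC2.G q 0 = 1 := by
      unfold TPHC2.G
      rw [add_zero, sub_zero, Real.one_rpow]
      norm_num
    rw [hG1, Real.one_rpow]
    have hGp := TPHC2.G_pos 1 δ (le_refl 1) hδ0 hδ1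
    calc (1:ℝ) = 1 ^ (1/(1:ℝ)) := (Real.one_rpow _).symm
      _ ≤ (TPHC2.G 1 δ)^(1/(1:ℝ)) := Real.rpow_le_rpow (by norm_num) hGp (by norm_num)
  · have hq1 : 1 < q := lt_of_lt_of_le hp1 hpq
    set ρs := Real.sqrt ((p-1)/(q-1)) with hρsdef
    have hr0 : 0 ≤ (p-1)/(q-1) := div_nonneg (by linarith) (by linarith)
    have hr1 : (p-1)/(q-1) ≤ 1 := by rw [div_le_one (by linarith)]; linarith
    have hρs1 : ρs ≤ 1 := by
      nlinarith [Real.sq_sqrt hr0, Real.sqrt_nonneg ((p-1)/(q-1))]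
    have hx1 : ρ*δ ≤ ρs*δ := mul_le_mul_of_nonneg_right hρ hδ0
    have hx0 : 0 ≤ ρ*δ := mul_nonneg hρ0 hδ0
    have hxs1 : ρs*δ ≤ 1 := by
      calc ρs*δ ≤ 1*1 := mul_le_mul hρs1 hδ1 hδ0 (by norm_num)
        _ = 1 := one_mul 1
    have hG1 : TPHC2.G q (ρ*δ) ≤ TPHC2.G q (ρs*δ) := by
      have h := TPHC2.G_mono q hq1.le (Set.mem_Icc.2 ⟨hx0, le_trans hx1 hxs1⟩)
        (Set.mem_Icc.2 ⟨le_trans hx0 hx1, hxs1⟩) hx1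
      unfold TPHC2.G
      dsimp only at h
      linarith
    have hGnn : 0 ≤ TPHC2.G q (ρ*δ) := by
      have := TPHC2.G_pos q (ρ*δ) hq1.le hx0 (le_trans hx1 hxs1); linarith
    calc (TPHC2.G q (ρ*δ))^(1/q) ≤ (TPHC2.G q (ρs*δ))^(1/q) :=
          Real.rpow_le_rpow hGnn hG1 (by positivity)
      _ ≤ (TPHC2.G p δ)^(1/p) := TPHC2.main_norm p q δ hp1 hpq hδ0 hδ1
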